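/- Let q be an odd prime power, let n be an even integer with n ≤ q, set k = n/2, and let a_1, ..., a_n be distinct elements of F_q. If there exists λ ∈ F_q^* such that λ · L_a(a_i)^{−1} is a nonzero square in F_q for all 1 ≤ i ≤ n, then there exist nonzero v_1, ..., v_n ∈ F_q with v_i^2 = λ · L_a(a_i)^{−1} such that the code GRS_k(a, v) is an MDS Euclidean self-dual code of length n (i.e., GRS_k(a,v) has dimension n/2, minimum distance n/2 + 1, and equals its Euclidean dual). -/

import Mathlib

open Finset

variable {F : Type*} [Field F]

/-- The generalized Reed–Solomon code
`GRS_k(a, v) = { (v₁ f(a₁), …, vₙ f(aₙ)) : f ∈ F[x], deg f ≤ k - 1 }`. -/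
noncomputable def GRSCode (n k : ℕ) (a v : Fin n → F) : Submodule F (Fin n → F) :=
  (Polynomial.degreeLT F k).map (LinearMap.pi fun i => v i • Polynomial.leval (a i))

/-- The Euclidean dual code `C^⊥ = { u : ∀ c ∈ C, ∑ i, u i * c i = 0 }`. -/
def dualCode {n : ℕ} (C : Submodule F (Fin n → F)) : Submodule F (Fin n → F) where
  carrier := { u | ∀ c ∈ C, ∑ i, u i * c i = 0 }
  add_mem' := by
    intro u w hu hw c hc
    simp only [Set.mem_setOf_eq] at hu hw
    simp [Pi.add_apply, add_mul, Finset.sum_add_distrib, hu c hc, hw c hc]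
  zero_mem' := by intro c hc; simp
  smul_mem' := by
    intro r u hu c hc
    simp only [Set.mem_setOf_eq] at hu
    simp [Pi.smul_apply, smul_eq_mul, mul_assoc, ← Finset.mul_sum, hu c hc]

/-- `C` has minimum Hamming distance `d`. -/
def IsMinDist [DecidableEq F] {n : ℕ} (C : Submodule F (Fin n → F)) (d : ℕ) : Prop :=
  (∀ c ∈ C, c ≠ 0 → d ≤ hammingNorm c) ∧ ∃ c ∈ C, c ≠ 0 ∧ hammingNorm c = d

open Polynomial

lemma basis_eq_C_nodalWeight_mul_nodal {ι : Type*} [DecidableEq ι] (s : Finset ι) (v : ι → F)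
    (i : ι) :
    Lagrange.basis s v i = C (Lagrange.nodalWeight s v i) * Lagrange.nodal (s.erase i) v := by
  simp_rw [Lagrange.basis, Lagrange.basisDivisor, Lagrange.nodalWeight, Lagrange.nodal,
    prod_mul_distrib, map_prod]

lemma coeff_basis' {ι : Type*} [DecidableEq ι] {s : Finset ι} {v : ι → F} {i : ι} (hi : i ∈ s) :
    (Lagrange.basis s v i).coeff (#s - 1) = Lagrange.nodalWeight s v i := by
  rw [basis_eq_C_nodalWeight_mul_nodal, coeff_C_mul, ← card_erase_of_mem hi,
    ← Lagrange.natDegree_nodal (s := s.erase i) (v := v),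
    Lagrange.nodal_monic.coeff_natDegree, mul_one]

lemma key_sum {ι : Type*} [DecidableEq ι] {s : Finset ι} {v : ι → F} (hvs : Set.InjOn v s)
    (h : F[X]) (hdeg : h.degree < ((#s - 1 : ℕ) : WithBot ℕ)) :
    ∑ i ∈ s, h.eval (v i) * Lagrange.nodalWeight s v i = 0 := by
  have hlt : h.degree < (#s : ℕ) :=
    lt_of_lt_of_le hdeg (by exact_mod_cast Nat.sub_le #s 1)
  have hint : Lagrange.interpolate s v (fun i => h.eval (v i)) = h :=
    (Lagrange.eq_interpolate hvs hlt).symm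
  have h0 : h.coeff (#s - 1) = 0 := coeff_eq_zero_of_degree_lt hdeg
  calc ∑ i ∈ s, h.eval (v i) * Lagrange.nodalWeight s v i
      = (Lagrange.interpolate s v (fun i => h.eval (v i))).coeff (#s - 1) := by
        rw [Lagrange.interpolate_apply, finset_sum_coeff]
        exact (sum_congr rfl fun i hi => by rw [coeff_C_mul, coeff_basis' hi]).symm
    _ = 0 := by rw [hint, h0]

noncomputable def pairingMap (n : ℕ) : (Fin n → F) →ₗ[F] Module.Dual F (Fin n → F) where
  toFun u :=
    { toFun := fun w => ∑ i, u i * w i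
      map_add' := by intros; simp [mul_add, Finset.sum_add_distrib]
      map_smul' := by intros; simp [Finset.mul_sum, mul_left_comm] }
  map_add' := by intros; ext w; simp [add_mul, Finset.sum_add_distrib]
  map_smul' := by intros; ext w; simp [Finset.mul_sum, mul_assoc]

lemma pairingMap_surjective (n : ℕ) : Function.Surjective (pairingMap (F := F) n) := by
  intro g
  refine ⟨fun i => g (fun j => if i = j then 1 else 0), ?_⟩
  apply LinearMap.ext; intro w
  show ∑ i, g (fun j => if i = j then 1 else 0) * w i = g w
  conv_rhs => rw [pi_eq_sum_univ w]
  rw [map_sum]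
  refine Finset.sum_congr rfl fun i _ => ?_
  rw [map_smul, smul_eq_mul, mul_comm]

lemma finrank_dualCode {n : ℕ} (C : Submodule F (Fin n → F)) :
    Module.finrank F (dualCode C) + Module.finrank F C = n := by
  classical
  set L : (Fin n → F) →ₗ[F] Module.Dual F C := C.subtype.dualMap ∘ₗ pairingMap n with hL
  have hker : LinearMap.ker L = dualCode C := by
    ext u
    constructor
    · intro hu c hc
      have := congrArg (fun g => g ⟨c, hc⟩) (LinearMap.mem_ker.mp hu)
      exact this
    · intro hu
      rw [LinearMap.mem_ker]
      ext ⟨c, hc⟩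
      exact hu c hc
  have hsurj : Function.Surjective L :=
    (LinearMap.dualMap_surjective_of_injective C.injective_subtype).comp (pairingMap_surjective n)
  have hrank := L.finrank_range_add_finrank_ker
  rw [LinearMap.range_eq_top.mpr hsurj, hker] at hrank
  have hdual : Module.finrank F (Module.Dual F C) = Module.finrank F C :=
    Subspace.dual_finrank_eq
  rw [finrank_top, hdual, Module.finrank_fin_fun] at hrank
  omega

/-- [JX2, Corollary 2.4].  Let `F` be a finite field of odd cardinality `q`,
`n` an even positive integer with `n ≤ q`, `k = n/2`, and `a 0, …, a (n-1)` distinct elements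
of `F`.  If there is `λ ∈ F^*` such that `λ · L_a(a i)⁻¹` is a nonzero square for all `i`,
then there are nonzero `v i` with `v i ^ 2 = λ · L_a(a i)⁻¹` such that `GRS_{n/2}(a, v)` is an
MDS Euclidean self-dual code of length `n`: it has dimension `n/2`, minimum distance
`n/2 + 1`, and equals its Euclidean dual. -/
theorem GRSCode_MDS_selfDual (F : Type*) [Field F] [Fintype F] [DecidableEq F]
    (hq : Odd (Fintype.card F))
    {n : ℕ} (hn : Even n) (hn0 : 0 < n) (hnq : n ≤ Fintype.card F)
    (a : Fin n → F) (ha : Function.Injective a)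
    (lam : F) (hlam : lam ≠ 0)
    (hsq : ∀ i, ∃ b : F, b ≠ 0 ∧
      lam * (∏ j ∈ Finset.univ.erase i, (a i - a j))⁻¹ = b ^ 2) :
    ∃ v : Fin n → F, (∀ i, v i ≠ 0) ∧
      (∀ i, v i ^ 2 = lam * (∏ j ∈ Finset.univ.erase i, (a i - a j))⁻¹) ∧
      Module.finrank F (GRSCode n (n / 2) a v) = n / 2 ∧
      IsMinDist (GRSCode n (n / 2) a v) (n / 2 + 1) ∧
      GRSCode n (n / 2) a v = dualCode (GRSCode n (n / 2) a v) := by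
  classical
  choose v hv hveq using hsq
  set k := n / 2 with hkdef
  have h2k : 2 * k = n := by
    obtain ⟨m, hm⟩ := hn; omega
  have hk1 : 1 ≤ k := by omega
  have hkn : k ≤ n := by omega
  set φ : F[X] →ₗ[F] (Fin n → F) := LinearMap.pi fun i => v i • Polynomial.leval (a i) with hφdef
  have hφ : ∀ (f : F[X]) (i : Fin n), φ f i = v i * f.eval (a i) := by
    intro f i
    simp [hφdef, LinearMap.pi_apply, Polynomial.leval_apply, smul_eq_mul]
  have hmem : ∀ c, c ∈ GRSCode n k a v ↔ ∃ f ∈ Polynomial.degreeLT F k, φ f = c := by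
    intro c; exact Submodule.mem_map
  have hinjOn : Set.InjOn a (univ : Finset (Fin n)) := Set.injOn_of_injective ha
  have hcard : #(univ : Finset (Fin n)) = n := by rw [card_univ, Fintype.card_fin]
  -- injectivity on degreeLT
  have hinj : ∀ f ∈ Polynomial.degreeLT F k, φ f = 0 → f = 0 := by
    intro f hf h0
    refine Polynomial.eq_zero_of_degree_lt_of_eval_index_eq_zero (v := a) univ hinjOn ?_ ?_
    · rw [hcard]
      exact lt_of_lt_of_le (Polynomial.mem_degreeLT.mp hf) (by exact_mod_cast hkn)
    · intro i _
      have := congrFun h0 i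
      rw [hφ] at this
      simpa [hv i] using this
  -- dimension
  have hdim : Module.finrank F (GRSCode n k a v) = k := by
    set ψ : Polynomial.degreeLT F k →ₗ[F] (Fin n → F) := φ ∘ₗ (Polynomial.degreeLT F k).subtype
      with hψ
    have hrange : LinearMap.range ψ = GRSCode n k a v := by
      rw [hψ, LinearMap.range_comp, Submodule.range_subtype]; rfl
    have hkerψ : LinearMap.ker ψ = ⊥ := by
      rw [LinearMap.ker_eq_bot']
      rintro ⟨f, hf⟩ h
      exact Subtype.ext (hinj f hf (by simpa [hψ] using h))
    haveI : Module.Finite F (Polynomial.degreeLT F k) :=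
      Module.Finite.equiv (Polynomial.degreeLTEquiv F k).symm
    have hrank := ψ.finrank_range_add_finrank_ker
    rw [hrange, hkerψ, finrank_bot, add_zero,
      LinearEquiv.finrank_eq (Polynomial.degreeLTEquiv F k), Module.finrank_fin_fun] at hrank
    exact hrank
  -- min distance lower bound
  have hlow : ∀ c ∈ GRSCode n k a v, c ≠ 0 → k + 1 ≤ hammingNorm c := by
    intro c hc hc0
    obtain ⟨f, hf, rfl⟩ := (hmem c).mp hc
    have hf0 : f ≠ 0 := by rintro rfl; exact hc0 (map_zero φ)
    have hroots : #(univ.filter fun i => f.eval (a i) = 0) ≤ k - 1 := by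
      calc #(univ.filter fun i => f.eval (a i) = 0)
          ≤ #f.roots.toFinset := by
            refine Finset.card_le_card_of_injOn a (fun i hi => ?_) (fun x _ y _ h => ha h)
            rw [Finset.mem_coe, Multiset.mem_toFinset, Polynomial.mem_roots hf0]
            exact (mem_filter.mp (Finset.mem_coe.mp hi)).2
        _ ≤ Multiset.card f.roots := f.roots.toFinset_card_le
        _ ≤ f.natDegree := f.card_roots'
        _ ≤ k - 1 := by
            have := (Polynomial.natDegree_lt_iff_degree_lt hf0).mpr
              (Polynomial.mem_degreeLT.mp hf)
            omega
    have hsplit := Finset.card_filter_add_card_filter_not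
      (s := (univ : Finset (Fin n))) (p := fun i => f.eval (a i) = 0)
    rw [hcard] at hsplit
    have hham : hammingNorm (φ f) = #(univ.filter fun i => ¬ f.eval (a i) = 0) := by
      show #(univ.filter fun i => φ f i ≠ 0) = _
      congr 1
      refine Finset.filter_congr fun i _ => ?_
      rw [hφ]
      simp [hv i, sub_eq_zero]
    omega
  -- min weight codeword
  have hk1n : k - 1 ≤ n := by omega
  set T : Finset (Fin n) := Finset.image (Fin.castLE hk1n) univ with hT
  have hTcard : #T = k - 1 := by
    rw [hT, Finset.card_image_of_injective _ (Fin.castLE_injective hk1n), card_univ,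
      Fintype.card_fin]
  set f0 : F[X] := Lagrange.nodal T a with hf0def
  have hf0mem : f0 ∈ Polynomial.degreeLT F k := by
    rw [Polynomial.mem_degreeLT, hf0def, Lagrange.degree_nodal, hTcard]
    exact_mod_cast (by omega : k - 1 < k)
  have heval0 : ∀ i, f0.eval (a i) = 0 ↔ i ∈ T := by
    intro i
    rw [hf0def, Lagrange.eval_nodal, Finset.prod_eq_zero_iff]
    constructor
    · rintro ⟨j, hj, hij⟩
      rw [sub_eq_zero] at hij
      rwa [ha hij]
    · intro hi; exact ⟨i, hi, sub_self _⟩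
  have hnorm0 : hammingNorm (φ f0) = k + 1 := by
    have h1 : (univ.filter fun i => ¬ f0.eval (a i) = 0) = Tᶜ := by
      ext i
      simp [heval0 i]
    have h2 : hammingNorm (φ f0) = #(univ.filter fun i => ¬ f0.eval (a i) = 0) := by
      show #(univ.filter fun i => φ f0 i ≠ 0) = _
      congr 1
      refine Finset.filter_congr fun i _ => ?_
      rw [hφ]
      simp [hv i]
    rw [h2, h1, Finset.card_compl, Fintype.card_fin, hTcard]
    omega
  -- self-orthogonality
  have hw : ∀ i, v i ^ 2 = lam * Lagrange.nodalWeight univ a i := by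
    intro i
    rw [← hveq i, Lagrange.nodalWeight, ← Finset.prod_inv_distrib]
  have hle : GRSCode n k a v ≤ dualCode (GRSCode n k a v) := by
    intro c hc c' hc'
    obtain ⟨f, hf, rfl⟩ := (hmem c).mp hc
    obtain ⟨g, hg, rfl⟩ := (hmem c').mp hc'
    have hfg : (f * g).degree < ((#(univ : Finset (Fin n)) - 1 : ℕ) : WithBot ℕ) := by
      rw [hcard]
      rcases eq_or_ne (f * g) 0 with h | h
      · rw [h, Polynomial.degree_zero]; exact WithBot.bot_lt_coe _
      · have hfne : f ≠ 0 := left_ne_zero_of_mul h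
        have hgne : g ≠ 0 := right_ne_zero_of_mul h
        rw [← Polynomial.natDegree_lt_iff_degree_lt h, Polynomial.natDegree_mul hfne hgne]
        have h1 := (Polynomial.natDegree_lt_iff_degree_lt hfne).mpr
          (Polynomial.mem_degreeLT.mp hf)
        have h2 := (Polynomial.natDegree_lt_iff_degree_lt hgne).mpr
          (Polynomial.mem_degreeLT.mp hg)
        omega
    have key := key_sum hinjOn (f * g) hfg
    calc ∑ i, φ f i * φ g i
        = ∑ i, lam * ((f * g).eval (a i) * Lagrange.nodalWeight univ a i) := by
          refine Finset.sum_congr rfl fun i _ => ?_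
          rw [hφ, hφ, Polynomial.eval_mul,
            show v i * f.eval (a i) * (v i * g.eval (a i)) =
              v i ^ 2 * (f.eval (a i) * g.eval (a i)) from by ring, hw i]
          ring
      _ = lam * ∑ i, (f * g).eval (a i) * Lagrange.nodalWeight univ a i := by
          rw [Finset.mul_sum]
      _ = 0 := by rw [key, mul_zero]
  have hfr := finrank_dualCode (GRSCode n k a v)
  have heq : GRSCode n k a v = dualCode (GRSCode n k a v) := by
    refine Submodule.eq_of_le_of_finrank_le hle ?_
    omega
  exact ⟨v, hv, fun i => (hveq i).symm, hdim, ⟨hlow, φ f0, (hmem _).mpr ⟨f0, hf0mem, rfl⟩,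
    by rw [← hammingNorm_ne_zero_iff, hnorm0]; omega, hnorm0⟩, heq⟩
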